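/- Let n ≥ 1 and let A ⊆ Sⁿ be a nonempty convex subset. Then either A = Sⁿ ∩ span(A) (i.e., A is a great sphere), or there exists a unit vector v ∈ span(A) such that ⟨x, v⟩ ≥ 0 for every x ∈ A; in the latter case A is contained in the m-hemisphere {x ∈ Sⁿ ∩ span(A) : ⟨x,v⟩ ≥ 0}, where m + 1 = dim span(A). (Theorem 2.3 of the paper: every convex set is a great sphere, a hemisphere, or a proper convex subset of a hemisphere of the great sphere it spans.) -/

import Mathlib

open scoped RealInnerProductSpace

noncomputable section

/-- `Esp n` is `ℝ^{n+1}` with its standard inner product. -/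
abbrev Esp (n : ℕ) : Type := EuclideanSpace ℝ (Fin (n + 1))

/-- The unit sphere `Sⁿ ⊆ ℝ^{n+1}`. -/
def sphereSet (n : ℕ) : Set (Esp n) := {x | ‖x‖ = 1}

/-- A convex segment in `Sⁿ`: `{(cos t)·u + (sin t)·v : 0 ≤ t ≤ a}` for an
orthonormal pair `u, v` and some `a ∈ [0, π]`. -/
def IsConvexSegment {n : ℕ} (S : Set (Esp n)) : Prop :=
  ∃ (u v : Esp n) (a : ℝ), ‖u‖ = 1 ∧ ‖v‖ = 1 ∧ ⟪u, v⟫ = 0 ∧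
    0 ≤ a ∧ a ≤ Real.pi ∧
    S = (fun t : ℝ => Real.cos t • u + Real.sin t • v) '' Set.Icc 0 a

/-- A subset of `Sⁿ` is convex if any two of its points are contained in a
convex segment contained in the set. -/
def SphConvex {n : ℕ} (A : Set (Esp n)) : Prop :=
  ∀ x ∈ A, ∀ y ∈ A, ∃ S : Set (Esp n), IsConvexSegment S ∧ S ⊆ A ∧ x ∈ S ∧ y ∈ S

lemma cos_add_cos_pos {A B : ℝ} (hA : 0 ≤ A) (hB : 0 ≤ B) (hAB : A + B < Real.pi) :
    0 < Real.cos A + Real.cos B := by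
  have h1 : Real.cos (Real.pi - A) < Real.cos B :=
    Real.cos_lt_cos_of_nonneg_of_le_pi hB (by linarith) (by linarith)
  rw [Real.cos_pi_sub] at h1
  linarith

lemma norm_e {n : ℕ} {u v : Esp n} (hu : ‖u‖ = 1) (hv : ‖v‖ = 1) (huv : ⟪u, v⟫ = 0) (θ : ℝ) :
    ‖Real.cos θ • u + Real.sin θ • v‖ = 1 := by
  have h : ‖Real.cos θ • u + Real.sin θ • v‖ ^ 2 = 1 := by
    rw [norm_add_sq_real, norm_smul, norm_smul, real_inner_smul_left, real_inner_smul_right, huv,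
      hu, hv]
    simp only [Real.norm_eq_abs, mul_one, mul_zero]
    rw [sq_abs, sq_abs]
    linarith [Real.sin_sq_add_cos_sq θ]
  nlinarith [norm_nonneg (Real.cos θ • u + Real.sin θ • v)]

lemma key {n : ℕ} {u v : Esp n} (hu : ‖u‖ = 1) (hv : ‖v‖ = 1) (huv : ⟪u, v⟫ = 0)
    {s t lam mu : ℝ} (hst : s ≤ t) (hts : t - s ≤ Real.pi)
    (hl : 0 ≤ lam) (hm : 0 ≤ mu)
    (hz : lam • (Real.cos s • u + Real.sin s • v) + mu • (Real.cos t • u + Real.sin t • v) ≠ 0) :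
    ∃ θ ∈ Set.Icc s t, ∃ c : ℝ, 0 < c ∧
      lam • (Real.cos s • u + Real.sin s • v) + mu • (Real.cos t • u + Real.sin t • v)
        = c • (Real.cos θ • u + Real.sin θ • v) := by
  have hlm : 0 < lam + mu := by
    rcases eq_or_lt_of_le hl with h | h
    · rcases eq_or_lt_of_le hm with h' | h'
      · exfalso; apply hz; rw [← h, ← h']; simp
      · linarith
    · linarith
  rcases eq_or_lt_of_le hts with hπ | hπ
  · -- t - s = π, so e t = - e s
    have hct : Real.cos t = -Real.cos s := by
      have : t = s + Real.pi := by linarith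
      rw [this, Real.cos_add_pi]
    have hstt : Real.sin t = -Real.sin s := by
      have : t = s + Real.pi := by linarith
      rw [this, Real.sin_add_pi]
    rcases lt_trichotomy lam mu with h | h | h
    · refine ⟨t, ⟨hst, le_refl t⟩, mu - lam, by linarith, ?_⟩
      rw [hct, hstt]; module
    · exfalso; apply hz; rw [hct, hstt, h]; module
    · refine ⟨s, ⟨le_refl s, hst⟩, lam - mu, by linarith, ?_⟩
      rw [hct, hstt]; module
  · -- main case : t - s < π
    set P := lam * Real.cos s + mu * Real.cos t with hP
    set Q := lam * Real.sin s + mu * Real.sin t with hQ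
    have hsin : 0 ≤ Real.sin (t - s) := Real.sin_nonneg_of_nonneg_of_le_pi (by linarith) hts
    have hgs : Q * Real.cos s - P * Real.sin s = mu * Real.sin (t - s) := by
      rw [Real.sin_sub]; ring
    have hgt : Q * Real.cos t - P * Real.sin t = -(lam * Real.sin (t - s)) := by
      rw [Real.sin_sub]; ring
    have hIVT : (0:ℝ) ∈ (fun θ => Q * Real.cos θ - P * Real.sin θ) '' Set.Icc s t := by
      apply intermediate_value_Icc' hst (by fun_prop)
      constructor
      · rw [hgt]; nlinarith [mul_nonneg hl hsin]
      · rw [hgs]; exact mul_nonneg hm hsin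
    obtain ⟨θ, hθ, hgθ⟩ := hIVT
    have pyth : Real.sin θ ^ 2 + Real.cos θ ^ 2 = 1 := Real.sin_sq_add_cos_sq θ
    have pyths : Real.sin s ^ 2 + Real.cos s ^ 2 = 1 := Real.sin_sq_add_cos_sq s
    have pytht : Real.sin t ^ 2 + Real.cos t ^ 2 = 1 := Real.sin_sq_add_cos_sq t
    set c : ℝ := lam * Real.cos (θ - s) + mu * Real.cos (t - θ) with hc
    have hceq : c = P * Real.cos θ + Q * Real.sin θ := by
      rw [hc, Real.cos_sub, Real.cos_sub]; ring
    have hPe : P = c * Real.cos θ := by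
      rw [hceq]
      linear_combination (-Real.sin θ) * hgθ + (-P) * pyth
    have hQe : Q = c * Real.sin θ := by
      rw [hceq]
      linear_combination (Real.cos θ) * hgθ + (-Q) * pyth
    have e1 : c * Real.cos (θ - s) = lam + mu * Real.cos (t - s) := by
      rw [Real.cos_sub, Real.cos_sub]
      linear_combination (Real.cos s) * hPe.symm + (Real.sin s) * hQe.symm + lam * pyths
    have e2 : c * Real.cos (t - θ) = lam * Real.cos (t - s) + mu := by
      rw [Real.cos_sub, Real.cos_sub]
      linear_combination (Real.cos t) * hPe.symm + (Real.sin t) * hQe.symm + mu * pytht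
    have hcosδ : -1 < Real.cos (t - s) := by
      have := Real.cos_lt_cos_of_nonneg_of_le_pi (x := t - s) (y := Real.pi)
        (by linarith) (le_refl _) hπ
      rwa [Real.cos_pi] at this
    have hsum : 0 < Real.cos (θ - s) + Real.cos (t - θ) :=
      cos_add_cos_pos (by linarith [hθ.1]) (by linarith [hθ.2]) (by linarith)
    have hcpos : 0 < c := by
      have hrhs : 0 < (lam + mu) * (1 + Real.cos (t - s)) := by
        apply mul_pos hlm; linarith
      nlinarith [e1, e2]
    refine ⟨θ, hθ, c, hcpos, ?_⟩
    have hz1 : lam • (Real.cos s • u + Real.sin s • v) + mu • (Real.cos t • u + Real.sin t • v)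
        = P • u + Q • v := by rw [hP, hQ]; module
    rw [hz1, hPe, hQe]
    module

lemma key2 {n : ℕ} {u v : Esp n} (hu : ‖u‖ = 1) (hv : ‖v‖ = 1) (huv : ⟪u, v⟫ = 0)
    {a s t lam mu : ℝ} (ha : a ≤ Real.pi) (hs : s ∈ Set.Icc 0 a) (ht : t ∈ Set.Icc 0 a)
    (hst : s ≤ t) (hl : 0 ≤ lam) (hm : 0 ≤ mu)
    (hz : lam • (Real.cos s • u + Real.sin s • v) + mu • (Real.cos t • u + Real.sin t • v) ≠ 0) :
    (‖lam • (Real.cos s • u + Real.sin s • v) + mu • (Real.cos t • u + Real.sin t • v)‖⁻¹) •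
        (lam • (Real.cos s • u + Real.sin s • v) + mu • (Real.cos t • u + Real.sin t • v))
      ∈ (fun t : ℝ => Real.cos t • u + Real.sin t • v) '' Set.Icc 0 a := by
  obtain ⟨θ, hθ, c, hc, heq⟩ := key hu hv huv hst (by linarith [hs.1, ht.2]) hl hm hz
  rw [heq, norm_smul, norm_e hu hv huv, Real.norm_eq_abs, abs_of_pos hc, mul_one, smul_smul,
    inv_mul_cancel₀ (ne_of_gt hc), one_smul]
  exact ⟨θ, ⟨le_trans hs.1 hθ.1, le_trans hθ.2 ht.2⟩, rfl⟩

lemma lemA {n : ℕ} {A : Set (Esp n)} (hc : SphConvex A)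
    {x y : Esp n} (hx : x ∈ A) (hy : y ∈ A) {lam mu : ℝ}
    (hl : 0 ≤ lam) (hm : 0 ≤ mu) (hz : lam • x + mu • y ≠ 0) :
    ‖lam • x + mu • y‖⁻¹ • (lam • x + mu • y) ∈ A := by
  obtain ⟨S, ⟨u, v, a, hu, hv, huv, ha0, haπ, hS⟩, hSA, hxS, hyS⟩ := hc x hx y hy
  subst hS
  obtain ⟨s, hsI, hxs⟩ := hxS
  obtain ⟨t, htI, hyt⟩ := hyS
  subst hxs; subst hyt
  rcases le_total s t with hst | hst
  · exact hSA (key2 hu hv huv haπ hsI htI hst hl hm hz)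
  · have hz' : mu • (Real.cos t • u + Real.sin t • v) + lam • (Real.cos s • u + Real.sin s • v)
        ≠ 0 := by rw [add_comm]; exact hz
    have := hSA (key2 hu hv huv haπ htI hsI hst hm hl hz')
    rwa [add_comm (mu • (Real.cos t • u + Real.sin t • v))] at this

def posCone {n : ℕ} (A : Set (Esp n)) : Set (Esp n) :=
  {z | z = 0 ∨ ∃ t : ℝ, 0 < t ∧ ∃ a ∈ A, z = t • a}

lemma subset_posCone {n : ℕ} (A : Set (Esp n)) : A ⊆ posCone A :=
  fun a ha => Or.inr ⟨1, one_pos, a, ha, (one_smul ℝ a).symm⟩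

lemma zero_mem_posCone {n : ℕ} (A : Set (Esp n)) : (0 : Esp n) ∈ posCone A := Or.inl rfl

lemma posCone_subset_span {n : ℕ} (A : Set (Esp n)) :
    posCone A ⊆ (Submodule.span ℝ A : Set (Esp n)) := by
  rintro z (rfl | ⟨t, ht, a, ha, rfl⟩)
  · exact (Submodule.span ℝ A).zero_mem
  · exact (Submodule.span ℝ A).smul_mem t (Submodule.subset_span ha)

lemma smul_mem_posCone {n : ℕ} {A : Set (Esp n)} {z : Esp n} {r : ℝ} (hr : 0 < r)
    (hz : z ∈ posCone A) : r • z ∈ posCone A := by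
  rcases hz with rfl | ⟨t, ht, a, ha, rfl⟩
  · rw [smul_zero]; exact Or.inl rfl
  · exact Or.inr ⟨r * t, mul_pos hr ht, a, ha, smul_smul r t a⟩

lemma mem_posCone_of_combo {n : ℕ} {A : Set (Esp n)} (hc : SphConvex A)
    {x y : Esp n} (hx : x ∈ A) (hy : y ∈ A) {lam mu : ℝ} (hl : 0 ≤ lam) (hm : 0 ≤ mu) :
    lam • x + mu • y ∈ posCone A := by
  by_cases hz : lam • x + mu • y = 0
  · rw [hz]; exact Or.inl rfl
  · refine Or.inr ⟨‖lam • x + mu • y‖, norm_pos_iff.2 hz,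
      ‖lam • x + mu • y‖⁻¹ • (lam • x + mu • y), lemA hc hx hy hl hm hz, ?_⟩
    rw [smul_smul, mul_inv_cancel₀ (norm_ne_zero_iff.2 hz), one_smul]

lemma posCone_convex {n : ℕ} {A : Set (Esp n)} (hc : SphConvex A) :
    Convex ℝ (posCone A) := by
  rintro p (rfl | ⟨t, ht, a, ha, rfl⟩) q hq α β hα hβ hαβ
  · rcases hq with rfl | ⟨r, hr, b, hb, rfl⟩
    · rw [smul_zero, smul_zero, add_zero]; exact Or.inl rfl
    · rw [smul_zero, zero_add, smul_smul]
      rcases eq_or_lt_of_le (mul_nonneg hβ hr.le) with h | h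
      · rw [← h, zero_smul]; exact Or.inl rfl
      · exact Or.inr ⟨β * r, h, b, hb, rfl⟩
  · rcases hq with rfl | ⟨r, hr, b, hb, rfl⟩
    · rw [smul_zero, add_zero, smul_smul]
      rcases eq_or_lt_of_le (mul_nonneg hα ht.le) with h | h
      · rw [← h, zero_smul]; exact Or.inl rfl
      · exact Or.inr ⟨α * t, h, a, ha, rfl⟩
    · rw [smul_smul, smul_smul]
      exact mem_posCone_of_combo hc ha hb (mul_nonneg hα ht.le) (mul_nonneg hβ hr.le)

lemma unit_mem_posCone {n : ℕ} {A : Set (Esp n)} (hA : A ⊆ sphereSet n) {z : Esp n}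
    (hz : z ∈ posCone A) (hz1 : ‖z‖ = 1) : z ∈ A := by
  rcases hz with rfl | ⟨t, ht, a, ha, rfl⟩
  · simp at hz1
  · have hna : ‖a‖ = 1 := hA ha
    rw [norm_smul, hna, mul_one, Real.norm_eq_abs, abs_of_pos ht] at hz1
    rw [hz1, one_smul]; exact ha

lemma span_subset_posCone {n : ℕ} {A : Set (Esp n)} (hc : SphConvex A)
    (hsub : (Submodule.span ℝ A : Set (Esp n)) ⊆ closure (posCone A)) :
    (Submodule.span ℝ A : Set (Esp n)) ⊆ posCone A := by
  set W := Submodule.span ℝ A with hW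
  set C := posCone A with hCdef
  set C' : Set ↥W := Subtype.val ⁻¹' C with hC'
  have hCW : C ⊆ (W : Set (Esp n)) := posCone_subset_span A
  have himg : Subtype.val '' C' = C := by
    rw [hC', Set.image_preimage_eq_inter_range, Subtype.range_val]
    exact Set.inter_eq_left.2 hCW
  have hconv' : Convex ℝ C' := (posCone_convex hc).linear_preimage W.subtype
  have hcl : closure C' = Set.univ := by
    have hind : Topology.IsInducing (Subtype.val : ↥W → Esp n) := Topology.IsInducing.subtypeVal
    rw [hind.closure_eq_preimage_closure_image, himg]
    ext w
    simp only [Set.mem_univ, iff_true, Set.mem_preimage]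
    exact hsub w.2
  have h0C' : (0 : ↥W) ∈ C' := by
    show ((0 : ↥W) : Esp n) ∈ C
    rw [Submodule.coe_zero]
    exact zero_mem_posCone A
  have hspanC : Submodule.span ℝ C = W := by
    apply le_antisymm (Submodule.span_le.2 hCW)
    exact Submodule.span_mono (subset_posCone A)
  have hspan' : Submodule.span ℝ C' = ⊤ := by
    apply Submodule.map_injective_of_injective W.injective_subtype
    rw [Submodule.map_span, Submodule.map_subtype_top]
    have : ⇑W.subtype '' C' = C := himg
    rw [this, hspanC]
  have haff : affineSpan ℝ C' = ⊤ := by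
    rw [AffineSubspace.affineSpan_eq_top_iff_vectorSpan_eq_top_of_nonempty ℝ ↥W ↥W ⟨0, h0C'⟩]
    apply eq_top_iff.2
    rw [← hspan']
    apply Submodule.span_le.2
    intro w hw
    have := vsub_mem_vectorSpan ℝ hw h0C'
    simpa using this
  obtain ⟨x, hx⟩ := (hconv'.interior_nonempty_iff_affineSpan_eq_top).2 haff
  have hnegx : -x ∈ interior C' := by
    have h3 : ((-3 : ℝ)) • x ∈ closure C' := by rw [hcl]; trivial
    have := hconv'.combo_interior_closure_mem_interior hx h3 (a := 1/2) (b := 1/2)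
      one_half_pos (by norm_num) (by norm_num)
    convert this using 1
    module
  have h0int : (0 : ↥W) ∈ interior C' := by
    have := hconv'.combo_interior_closure_mem_interior hx
      (subset_closure (interior_subset hnegx)) (a := 1/2) (b := 1/2)
      one_half_pos (by norm_num) (by norm_num)
    convert this using 1
    module
  obtain ⟨ε, hε, hball⟩ := Metric.mem_nhds_iff.1 (mem_interior_iff_mem_nhds.1 h0int)
  have hall : ∀ w : ↥W, w ∈ C' := by
    intro w
    by_cases hw0 : w = 0
    · rw [hw0]; exact h0C'
    · have hnw : 0 < ‖w‖ := norm_pos_iff.2 hw0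
      set r : ℝ := ε / (2 * ‖w‖) with hr
      have hrpos : 0 < r := by positivity
      have hmem : r • w ∈ C' := by
        apply hball
        rw [Metric.mem_ball, dist_zero_right, norm_smul, Real.norm_eq_abs, abs_of_pos hrpos]
        have hnw' : ‖(w : Esp n)‖ ≠ 0 := ne_of_gt hnw
        have hcalc : r * ‖w‖ = ε / 2 := by
          rw [hr]
          field_simp
        rw [hcalc]; linarith
      have hid : w = r⁻¹ • (r • w) := by
        rw [smul_smul, inv_mul_cancel₀ (ne_of_gt hrpos), one_smul]
      rw [hid]
      show ((r⁻¹ • (r • w) : ↥W) : Esp n) ∈ C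
      rw [Submodule.coe_smul]
      exact smul_mem_posCone (inv_pos.2 hrpos) hmem
  intro z hz
  exact hall ⟨z, hz⟩

/-- Theorem 2.3 (classification of convex sets): a nonempty convex subset `A`
of `Sⁿ` either equals the great sphere `Sⁿ ∩ span(A)`, or there is a unit
vector `v ∈ span(A)` with `⟨x, v⟩ ≥ 0` for all `x ∈ A`; in the latter case
`A` is contained in the hemisphere `{x ∈ sphereSet n ∩ (span A) | 0 ≤ ...}`. -/
theorem sphConvex_classification (n : ℕ) (hn : 1 ≤ n) (A : Set (Esp n))
    (hA : A ⊆ sphereSet n) (hne : A.Nonempty) (hc : SphConvex A) :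
    A = sphereSet n ∩ (Submodule.span ℝ A : Set (Esp n)) ∨
      ∃ v : Esp n, ‖v‖ = 1 ∧ v ∈ Submodule.span ℝ A ∧
        (∀ x ∈ A, 0 ≤ ⟪x, v⟫) ∧
        A ⊆ {x ∈ sphereSet n ∩ (Submodule.span ℝ A : Set (Esp n)) | 0 ≤ ⟪x, v⟫} := by
  set W := Submodule.span ℝ A with hW
  by_cases hall : ∀ w : Esp n, w ∈ W → ‖w‖ = 1 → w ∈ A
  · left
    apply Set.Subset.antisymm
    · intro x hx; exact ⟨hA hx, Submodule.subset_span hx⟩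
    · rintro x ⟨hx1, hx2⟩; exact hall x hx2 hx1
  · right
    push_neg at hall
    obtain ⟨z, hzW, hz1, hzA⟩ := hall
    have hnsub : ¬ ((W : Set (Esp n)) ⊆ closure (posCone A)) := by
      intro hsub
      exact hzA (unit_mem_posCone hA (span_subset_posCone hc hsub hzW) hz1)
    rw [Set.not_subset] at hnsub
    obtain ⟨p, hpW, hpcl⟩ := hnsub
    obtain ⟨f, u, hfu, hup⟩ := geometric_hahn_banach_closed_point
      ((posCone_convex hc).closure) isClosed_closure hpcl
    have hu0 : 0 < u := by
      have := hfu 0 (subset_closure (zero_mem_posCone A))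
      simpa using this
    have hfA : ∀ x ∈ A, f x ≤ 0 := by
      intro x hx
      by_contra hpos
      push_neg at hpos
      have ht : 0 < (u + 1) / f x := by positivity
      have := hfu (((u + 1) / f x) • x)
        (subset_closure (Or.inr ⟨(u + 1) / f x, ht, x, hx, rfl⟩))
      rw [map_smul, smul_eq_mul, div_mul_cancel₀ _ (ne_of_gt hpos)] at this
      linarith
    set v₀ : Esp n := (InnerProductSpace.toDual ℝ (Esp n)).symm f with hv₀
    have hv₀f : ∀ x : Esp n, ⟪v₀, x⟫ = f x := fun x => InnerProductSpace.toDual_symm_apply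
    set v₁ : Esp n := (W.orthogonalProjectionOnto (-v₀) : Esp n) with hv₁
    have horth : -v₀ - v₁ ∈ Wᗮ := W.sub_starProjection_mem_orthogonal (-v₀)
    have hv₁inner : ∀ x : Esp n, x ∈ W → ⟪x, v₁⟫ = - f x := by
      intro x hx
      have h0 : ⟪x, -v₀ - v₁⟫ = 0 := (Submodule.mem_orthogonal W _).1 horth x hx
      rw [inner_sub_right] at h0
      have h1 : ⟪x, -v₀⟫ = ⟪x, v₁⟫ := by linarith
      rw [← h1, inner_neg_right, real_inner_comm, hv₀f]
    have hv₁W : v₁ ∈ W := SetLike.coe_mem _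
    have hv₁ne : v₁ ≠ 0 := by
      intro h
      have h2 := hv₁inner p hpW
      rw [h, inner_zero_right] at h2
      linarith
    have hnv₁ : 0 < ‖v₁‖ := norm_pos_iff.2 hv₁ne
    have hkey : ∀ x ∈ A, 0 ≤ ⟪x, ‖v₁‖⁻¹ • v₁⟫ := by
      intro x hx
      rw [real_inner_smul_right]
      have h3 := hv₁inner x (Submodule.subset_span hx)
      have hfx := hfA x hx
      have h4 : 0 ≤ ⟪x, v₁⟫ := by rw [h3]; linarith
      exact mul_nonneg (inv_nonneg.2 (norm_nonneg _)) h4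
    refine ⟨‖v₁‖⁻¹ • v₁, ?_, W.smul_mem _ hv₁W, hkey, ?_⟩
    · rw [norm_smul, Real.norm_eq_abs, abs_of_pos (inv_pos.2 hnv₁),
        inv_mul_cancel₀ (ne_of_gt hnv₁)]
    · intro x hx
      exact ⟨⟨hA hx, Submodule.subset_span hx⟩, hkey x hx⟩
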